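/- Let N ≥ 8 be an integer with N mod 3 ≠ 1, and let g_0, …, g_N be arbitrary positive real numbers. Then there exist unique positive real numbers λ_0, …, λ_N such that: (i) λ_i·λ_{i+1}·λ_{i+2} = g_i for every 0 ≤ i ≤ N−2; (ii) λ_{N−1}·λ_N·P = g_{N−1}; and (iii) λ_N·P·Q = g_N, where P := λ_0·λ_1·λ_2²·λ_3·λ_4·λ_5·λ_{N−2}·λ_{N−1}·λ_N and Q := λ_0·λ_1·λ_2·λ_3. -/

import Mathlib

/-- The factor `P := λ₀·λ₁·λ₂²·λ₃·λ₄·λ₅·λ_{N−2}·λ_{N−1}·λ_N`. -/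
def Pfac (N : ℕ) (l : ℕ → ℝ) : ℝ :=
  l 0 * l 1 * (l 2) ^ 2 * l 3 * l 4 * l 5 * l (N - 2) * l (N - 1) * l N

/-- The factor `Q := λ₀·λ₁·λ₂·λ₃`. -/
def Qfac (l : ℕ → ℝ) : ℝ := l 0 * l 1 * l 2 * l 3

/-- The multiplicative system determining the normalized lift of a twisted
pentagram spiral of type `(N,1)`:
(i) `λ_i·λ_{i+1}·λ_{i+2} = g_i` for `0 ≤ i ≤ N−2`;
(ii) `λ_{N−1}·λ_N·P = g_{N−1}`; (iii) `λ_N·P·Q = g_N`;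
with all `λ_0, …, λ_N` positive. -/
def SysHolds (N : ℕ) (g l : ℕ → ℝ) : Prop :=
  (∀ i, i ≤ N → 0 < l i) ∧
  (∀ i, i ≤ N - 2 → l i * l (i + 1) * l (i + 2) = g i) ∧
  l (N - 1) * l N * Pfac N l = g (N - 1) ∧
  l N * Pfac N l * Qfac l = g N

noncomputable def Kfac (g : ℕ → ℝ) : ℕ → ℝ
  | 0 => 1
  | 1 => 1
  | 2 => 1
  | (i+3) => g (i+1) / g i * Kfac g i

lemma Kfac_zero (g : ℕ → ℝ) : Kfac g 0 = 1 := rfl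
lemma Kfac_one (g : ℕ → ℝ) : Kfac g 1 = 1 := rfl
lemma Kfac_two (g : ℕ → ℝ) : Kfac g 2 = 1 := rfl
lemma Kfac_succ3 (g : ℕ → ℝ) (i : ℕ) : Kfac g (i+3) = g (i+1) / g i * Kfac g i := rfl

lemma Kfac_pos (g : ℕ → ℝ) (hg : ∀ i, 0 < g i) : ∀ i, 0 < Kfac g i := by
  have H : ∀ i, 0 < Kfac g i ∧ 0 < Kfac g (i+1) ∧ 0 < Kfac g (i+2) := by
    intro i
    induction i with
    | zero => exact ⟨by rw [Kfac_zero]; norm_num, by rw [Kfac_one]; norm_num,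
        by rw [Kfac_two]; norm_num⟩
    | succ n ih =>
      refine ⟨ih.2.1, ih.2.2, ?_⟩
      rw [show n + 1 + 2 = n + 3 by omega, Kfac_succ3]
      exact mul_pos (div_pos (hg _) (hg _)) ih.1
  exact fun i => (H i).1

lemma Kfac_triple (g : ℕ → ℝ) (hg : ∀ i, 0 < g i) :
    ∀ i, Kfac g i * Kfac g (i+1) * Kfac g (i+2) * g 0 = g i := by
  intro i
  induction i with
  | zero => rw [Kfac_zero, Kfac_one, Kfac_two]; ring
  | succ n ih =>
    rw [show n + 1 + 2 = n + 3 by omega, Kfac_succ3]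
    have hgn := (hg n).ne'
    field_simp
    linear_combination g (n+1) * ih

private lemma cube_inj {x y : ℝ} (hx : 0 < x) (hy : 0 < y) (h : x ^ 3 = y ^ 3) : x = y := by
  nlinarith [sq_nonneg (x - y), sq_nonneg (x + y), mul_pos hx hy]

private lemma exists_cbrt {x : ℝ} (hx : 0 < x) : ∃ y : ℝ, 0 < y ∧ y ^ 3 = x := by
  refine ⟨x ^ ((1:ℝ)/3), Real.rpow_pos_of_pos hx _, ?_⟩
  rw [← Real.rpow_natCast (x ^ ((1:ℝ)/3)) 3, ← Real.rpow_mul hx.le]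
  norm_num

lemma solveA (A₁ B₁ G : ℝ) (hA : 0 < A₁) (hB : 0 < B₁) (hG : 0 < G) :
    ∃ a b c : ℝ, 0 < a ∧ 0 < b ∧ 0 < c ∧
      a * c ^ 2 = A₁ ∧ a ^ 2 * c = B₁ ∧ a * b * c = G ∧
      ∀ a' b' c' : ℝ, 0 < a' → 0 < b' → 0 < c' →
        a' * c' ^ 2 = A₁ → a' ^ 2 * c' = B₁ → a' * b' * c' = G → a' = a ∧ b' = b ∧ c' = c := by
  obtain ⟨a, ha, ha3⟩ := exists_cbrt (show 0 < B₁ ^ 2 / A₁ by positivity)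
  obtain ⟨c, hc, hc3⟩ := exists_cbrt (show 0 < A₁ ^ 2 / B₁ by positivity)
  have hAeq : a * c ^ 2 = A₁ := by
    apply cube_inj (by positivity) hA
    have h : (a * c ^ 2) ^ 3 = a ^ 3 * (c ^ 3) ^ 2 := by ring
    rw [h, ha3, hc3]; field_simp
  have hBeq : a ^ 2 * c = B₁ := by
    apply cube_inj (by positivity) hB
    have h : (a ^ 2 * c) ^ 3 = (a ^ 3) ^ 2 * c ^ 3 := by ring
    rw [h, ha3, hc3]; field_simp
  refine ⟨a, G / (a * c), c, ha, by positivity, hc, hAeq, hBeq, by field_simp, ?_⟩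
  intro a' b' c' ha' hb' hc' h1 h2 h3
  have ea : a' = a := by
    apply cube_inj ha' ha
    rw [ha3, eq_div_iff hA.ne']
    rw [← h1, ← h2]; ring
  have ec : c' = c := by
    apply cube_inj hc' hc
    rw [hc3, eq_div_iff hB.ne']
    rw [← h1, ← h2]; ring
  refine ⟨ea, ?_, ec⟩
  rw [eq_div_iff (by positivity : (a * c) ≠ 0)]
  rw [ea, ec] at h3
  linarith [h3]

lemma solveB (A₁ B₁ G : ℝ) (hA : 0 < A₁) (hB : 0 < B₁) (hG : 0 < G) :
    ∃ a b c : ℝ, 0 < a ∧ 0 < b ∧ 0 < c ∧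
      b * c ^ 2 = A₁ ∧ a * c ^ 2 = B₁ ∧ a * b * c = G ∧
      ∀ a' b' c' : ℝ, 0 < a' → 0 < b' → 0 < c' →
        b' * c' ^ 2 = A₁ → a' * c' ^ 2 = B₁ → a' * b' * c' = G → a' = a ∧ b' = b ∧ c' = c := by
  obtain ⟨c, hc, hc3⟩ := exists_cbrt (show 0 < A₁ * B₁ / G by positivity)
  have hG3 : c ^ 3 * G = A₁ * B₁ := by rw [hc3]; field_simp
  refine ⟨B₁ / c ^ 2, A₁ / c ^ 2, c, by positivity, by positivity, hc, by field_simp,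
    by field_simp, ?_, ?_⟩
  · field_simp
    linear_combination (-1) * hG3
  · intro a' b' c' ha' hb' hc' h1 h2 h3
    have hc'3 : c' ^ 3 * G = A₁ * B₁ := by rw [← h1, ← h2, ← h3]; ring
    have ec : c' = c := by
      apply cube_inj hc' hc
      exact mul_right_cancel₀ hG.ne' (by rw [hc'3, hG3])
    refine ⟨?_, ?_, ec⟩
    · rw [eq_div_iff (by positivity : (c:ℝ) ^ 2 ≠ 0), ← ec]
      linarith [h2]
    · rw [eq_div_iff (by positivity : (c:ℝ) ^ 2 ≠ 0), ← ec]
      linarith [h1]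

lemma key (m : ℕ) (h3 : (m + 8) % 3 ≠ 1) (g : ℕ → ℝ) (hg : ∀ i, 0 < g i) :
    ∃ l : ℕ → ℝ, SysHolds (m+8) g l ∧
      ∀ l' : ℕ → ℝ, SysHolds (m+8) g l' → ∀ i, i ≤ m+8 → l' i = l i := by
  have e2 : m + 8 - 2 = m + 6 := by omega
  have e1 : m + 8 - 1 = m + 7 := by omega
  have hK := Kfac_pos g hg
  have hKt := Kfac_triple g hg
  -- P and Q reduction for any partial solution
  have hred : ∀ l' : ℕ → ℝ, (∀ i, i ≤ m + 6 → l' i * l' (i+1) * l' (i+2) = g i) →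
      Pfac (m+8) l' = g 0 * g 2 * g (m+6) * l' 5 ∧ Qfac l' = g 1 * l' 0 := by
    intro l' hl
    have h0 := hl 0 (by omega)
    have h1 := hl 1 (by omega)
    have h2 := hl 2 (by omega)
    have hN := hl (m+6) (by omega)
    norm_num at h0 h1 h2
    rw [show m+6+1 = m+7 by omega, show m+6+2 = m+8 by omega] at hN
    constructor
    · rw [Pfac, e1, e2, ← h0, ← h2, ← hN]; ring
    · rw [Qfac, ← h1]; ring
  -- normal form of any solution
  have hform : ∀ l' : ℕ → ℝ, (∀ i, i ≤ m + 8 → 0 < l' i) →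
      (∀ i, i ≤ m + 6 → l' i * l' (i+1) * l' (i+2) = g i) →
      ∀ i, i ≤ m + 8 → l' i = Kfac g i * l' (i % 3) := by
    intro l' hpos hl i
    induction i using Nat.strong_induction_on with
    | _ i ih =>
      intro hi
      rcases i with _ | _ | _ | j
      · rw [Kfac_zero]; norm_num
      · rw [Kfac_one]; norm_num
      · rw [Kfac_two]; norm_num
      · have hA := hl j (by omega)
        have hB := hl (j+1) (by omega)
        rw [show j+1+1 = j+2 by omega, show j+1+2 = j+3 by omega] at hB
        have hgj := (hg j).ne'
        have hrec : l' (j+3) * g j = g (j+1) * l' j := by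
          calc l' (j+3) * g j = l' (j+3) * (l' j * l' (j+1) * l' (j+2)) := by rw [hA]
          _ = l' j * (l' (j+1) * l' (j+2) * l' (j+3)) := by ring
          _ = g (j+1) * l' j := by rw [hB]; ring
        have ihj : l' j = Kfac g j * l' (j % 3) := ih j (by omega) (by omega)
        have hgoal : l' (j+3) = Kfac g (j+3) * l' ((j+3) % 3) := by
          rw [Kfac_succ3, show (j+3) % 3 = j % 3 by omega, mul_assoc, ← ihj,
            div_mul_eq_mul_div, eq_div_iff hgj]
          linear_combination hrec
        exact hgoal
  -- the constant denominators
  have hD₁p : 0 < g 0 * g 2 * g (m+6) * (Kfac g 5 * Kfac g (m+7) * Kfac g (m+8)) :=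
    mul_pos (mul_pos (mul_pos (hg 0) (hg 2)) (hg _))
      (mul_pos (mul_pos (hK 5) (hK _)) (hK _))
  have hD₂p : 0 < g 0 * g 1 * g 2 * g (m+6) * (Kfac g 5 * Kfac g (m+8)) :=
    mul_pos (mul_pos (mul_pos (mul_pos (hg 0) (hg 1)) (hg 2)) (hg _))
      (mul_pos (hK 5) (hK _))
  set D₁ : ℝ := g 0 * g 2 * g (m+6) * (Kfac g 5 * Kfac g (m+7) * Kfac g (m+8)) with hD₁
  set D₂ : ℝ := g 0 * g 1 * g 2 * g (m+6) * (Kfac g 5 * Kfac g (m+8)) with hD₂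
  have hmod : m % 3 = 0 ∨ m % 3 = 1 := by omega
  rcases hmod with hm | hm
  · -- N ≡ 2 [MOD 3] : pattern b·c², a·c²
    obtain ⟨a, b, c, ha, hb, hc, hbc2, hac2, habc, huniq⟩ :=
      solveB (g (m+7) / D₁) (g (m+8) / D₂) (g 0)
        (div_pos (hg _) hD₁p) (div_pos (hg _) hD₂p) (hg 0)
    set t : ℕ → ℝ := fun r => if r = 0 then a else if r = 1 then b else c with htdef
    have ht0 : t 0 = a := by simp [htdef]
    have ht1 : t 1 = b := by simp [htdef]
    have ht2 : t 2 = c := by simp [htdef]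
    have htpos : ∀ r, 0 < t r := by
      intro r; rw [htdef]; dsimp only; split_ifs <;> assumption
    set l : ℕ → ℝ := fun i => Kfac g i * t (i % 3) with hldef
    have hl : ∀ i, l i = Kfac g i * t (i % 3) := fun i => rfl
    have hlpos : ∀ i, 0 < l i := fun i => mul_pos (hK i) (htpos _)
    have htprod : ∀ i, t (i % 3) * t ((i+1) % 3) * t ((i+2) % 3) = a * b * c := by
      intro i
      rcases (show i % 3 = 0 ∨ i % 3 = 1 ∨ i % 3 = 2 by omega) with h | h | h
      · rw [h, show (i+1)%3 = 1 by omega, show (i+2)%3 = 2 by omega, ht0, ht1, ht2]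
      · rw [h, show (i+1)%3 = 2 by omega, show (i+2)%3 = 0 by omega, ht1, ht2, ht0]; ring
      · rw [h, show (i+1)%3 = 0 by omega, show (i+2)%3 = 1 by omega, ht2, ht0, ht1]; ring
    have hltriple : ∀ i, i ≤ m + 6 → l i * l (i+1) * l (i+2) = g i := by
      intro i _
      rw [hl, hl, hl]
      calc Kfac g i * t (i % 3) * (Kfac g (i+1) * t ((i+1) % 3)) *
            (Kfac g (i+2) * t ((i+2) % 3))
          = (Kfac g i * Kfac g (i+1) * Kfac g (i+2)) *
            (t (i % 3) * t ((i+1) % 3) * t ((i+2) % 3)) := by ring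
        _ = (Kfac g i * Kfac g (i+1) * Kfac g (i+2)) * (g 0) := by rw [htprod i, habc]
        _ = g i := by linear_combination hKt i
    obtain ⟨hP, hQ⟩ := hred l hltriple
    have hl0 : l 0 = a := by rw [hl, show (0:ℕ) % 3 = 0 from rfl, ht0, Kfac_zero, one_mul]
    have hl5 : l 5 = Kfac g 5 * c := by rw [hl, show (5:ℕ) % 3 = 2 from rfl, ht2]
    have hl7 : l (m+7) = Kfac g (m+7) * b := by
      rw [hl, show (m+7) % 3 = 1 by omega, ht1]
    have hl8 : l (m+8) = Kfac g (m+8) * c := by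
      rw [hl, show (m+8) % 3 = 2 by omega, ht2]
    have hbc2' : b * c ^ 2 * D₁ = g (m+7) := by
      rw [hbc2]; field_simp
    have hac2' : a * c ^ 2 * D₂ = g (m+8) := by
      rw [hac2]; field_simp
    refine ⟨l, ⟨fun i _ => hlpos i, fun i hi => hltriple i (by omega), ?_, ?_⟩, ?_⟩
    · rw [e1, hP, hl5, hl7, hl8]
      rw [hD₁] at hbc2'
      linear_combination hbc2'
    · rw [hP, hQ, hl5, hl8, hl0]
      rw [hD₂] at hac2'
      linear_combination hac2'
    · rintro l' ⟨hp', ht', hb1', hb2'⟩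
      rw [e2] at ht'
      rw [e1] at hb1'
      obtain ⟨hP', hQ'⟩ := hred l' ht'
      have hf := hform l' hp' ht'
      have h3' : l' 0 * l' 1 * l' 2 = g 0 := by
        have := ht' 0 (by omega); norm_num at this; exact this
      rw [hP', hf 5 (by omega), hf (m+7) (by omega), hf (m+8) (by omega),
        show (5:ℕ) % 3 = 2 from rfl, show (m+7) % 3 = 1 by omega,
        show (m+8) % 3 = 2 by omega] at hb1'
      rw [hP', hQ', hf 5 (by omega), hf (m+8) (by omega),
        show (5:ℕ) % 3 = 2 from rfl, show (m+8) % 3 = 2 by omega] at hb2'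
      have h1' : l' 1 * (l' 2) ^ 2 = g (m+7) / D₁ := by
        rw [eq_div_iff hD₁p.ne', hD₁]
        linear_combination hb1'
      have h2' : l' 0 * (l' 2) ^ 2 = g (m+8) / D₂ := by
        rw [eq_div_iff hD₂p.ne', hD₂]
        linear_combination hb2'
      obtain ⟨ea, eb, ec⟩ := huniq (l' 0) (l' 1) (l' 2)
        (hp' 0 (by omega)) (hp' 1 (by omega)) (hp' 2 (by omega)) h1' h2' h3'
      intro i hi
      rw [hf i hi, hl]
      congr 1
      rcases (show i % 3 = 0 ∨ i % 3 = 1 ∨ i % 3 = 2 by omega) with h | h | h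
      · rw [h, ht0, ea]
      · rw [h, ht1, eb]
      · rw [h, ht2, ec]
  · -- N ≡ 0 [MOD 3] : pattern a·c², a²·c
    obtain ⟨a, b, c, ha, hb, hc, hac2, ha2c, habc, huniq⟩ :=
      solveA (g (m+7) / D₁) (g (m+8) / D₂) (g 0)
        (div_pos (hg _) hD₁p) (div_pos (hg _) hD₂p) (hg 0)
    set t : ℕ → ℝ := fun r => if r = 0 then a else if r = 1 then b else c with htdef
    have ht0 : t 0 = a := by simp [htdef]
    have ht1 : t 1 = b := by simp [htdef]
    have ht2 : t 2 = c := by simp [htdef]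
    have htpos : ∀ r, 0 < t r := by
      intro r; rw [htdef]; dsimp only; split_ifs <;> assumption
    set l : ℕ → ℝ := fun i => Kfac g i * t (i % 3) with hldef
    have hl : ∀ i, l i = Kfac g i * t (i % 3) := fun i => rfl
    have hlpos : ∀ i, 0 < l i := fun i => mul_pos (hK i) (htpos _)
    have htprod : ∀ i, t (i % 3) * t ((i+1) % 3) * t ((i+2) % 3) = a * b * c := by
      intro i
      rcases (show i % 3 = 0 ∨ i % 3 = 1 ∨ i % 3 = 2 by omega) with h | h | h
      · rw [h, show (i+1)%3 = 1 by omega, show (i+2)%3 = 2 by omega, ht0, ht1, ht2]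
      · rw [h, show (i+1)%3 = 2 by omega, show (i+2)%3 = 0 by omega, ht1, ht2, ht0]; ring
      · rw [h, show (i+1)%3 = 0 by omega, show (i+2)%3 = 1 by omega, ht2, ht0, ht1]; ring
    have hltriple : ∀ i, i ≤ m + 6 → l i * l (i+1) * l (i+2) = g i := by
      intro i _
      rw [hl, hl, hl]
      calc Kfac g i * t (i % 3) * (Kfac g (i+1) * t ((i+1) % 3)) *
            (Kfac g (i+2) * t ((i+2) % 3))
          = (Kfac g i * Kfac g (i+1) * Kfac g (i+2)) *
            (t (i % 3) * t ((i+1) % 3) * t ((i+2) % 3)) := by ring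
        _ = (Kfac g i * Kfac g (i+1) * Kfac g (i+2)) * (g 0) := by rw [htprod i, habc]
        _ = g i := by linear_combination hKt i
    obtain ⟨hP, hQ⟩ := hred l hltriple
    have hl0 : l 0 = a := by rw [hl, show (0:ℕ) % 3 = 0 from rfl, ht0, Kfac_zero, one_mul]
    have hl5 : l 5 = Kfac g 5 * c := by rw [hl, show (5:ℕ) % 3 = 2 from rfl, ht2]
    have hl7 : l (m+7) = Kfac g (m+7) * c := by
      rw [hl, show (m+7) % 3 = 2 by omega, ht2]
    have hl8 : l (m+8) = Kfac g (m+8) * a := by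
      rw [hl, show (m+8) % 3 = 0 by omega, ht0]
    have hac2' : a * c ^ 2 * D₁ = g (m+7) := by
      rw [hac2]; field_simp
    have ha2c' : a ^ 2 * c * D₂ = g (m+8) := by
      rw [ha2c]; field_simp
    refine ⟨l, ⟨fun i _ => hlpos i, fun i hi => hltriple i (by omega), ?_, ?_⟩, ?_⟩
    · rw [e1, hP, hl5, hl7, hl8]
      rw [hD₁] at hac2'
      linear_combination hac2'
    · rw [hP, hQ, hl5, hl8, hl0]
      rw [hD₂] at ha2c'
      linear_combination ha2c'
    · rintro l' ⟨hp', ht', hb1', hb2'⟩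
      rw [e2] at ht'
      rw [e1] at hb1'
      obtain ⟨hP', hQ'⟩ := hred l' ht'
      have hf := hform l' hp' ht'
      have h3' : l' 0 * l' 1 * l' 2 = g 0 := by
        have := ht' 0 (by omega); norm_num at this; exact this
      rw [hP', hf 5 (by omega), hf (m+7) (by omega), hf (m+8) (by omega),
        show (5:ℕ) % 3 = 2 from rfl, show (m+7) % 3 = 2 by omega,
        show (m+8) % 3 = 0 by omega] at hb1'
      rw [hP', hQ', hf 5 (by omega), hf (m+8) (by omega),
        show (5:ℕ) % 3 = 2 from rfl, show (m+8) % 3 = 0 by omega] at hb2'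
      have h1' : l' 0 * (l' 2) ^ 2 = g (m+7) / D₁ := by
        rw [eq_div_iff hD₁p.ne', hD₁]
        linear_combination hb1'
      have h2' : (l' 0) ^ 2 * l' 2 = g (m+8) / D₂ := by
        rw [eq_div_iff hD₂p.ne', hD₂]
        linear_combination hb2'
      obtain ⟨ea, eb, ec⟩ := huniq (l' 0) (l' 1) (l' 2)
        (hp' 0 (by omega)) (hp' 1 (by omega)) (hp' 2 (by omega)) h1' h2' h3'
      intro i hi
      rw [hf i hi, hl]
      congr 1
      rcases (show i % 3 = 0 ∨ i % 3 = 1 ∨ i % 3 = 2 by omega) with h | h | h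
      · rw [h, ht0, ea]
      · rw [h, ht1, eb]
      · rw [h, ht2, ec]

lemma SysHolds_congr (N : ℕ) (g g' l : ℕ → ℝ) (h : ∀ i, i ≤ N → g i = g' i) :
    SysHolds N g l ↔ SysHolds N g' l := by
  unfold SysHolds
  constructor <;> rintro ⟨p, q, r, s⟩
  · exact ⟨p, fun i hi => (q i hi).trans (h i (by omega)),
      r.trans (h _ (by omega)), s.trans (h _ (by omega))⟩
  · exact ⟨p, fun i hi => (q i hi).trans (h i (by omega)).symm,
      r.trans (h _ (by omega)).symm, s.trans (h _ (by omega)).symm⟩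

/-- for `N ≥ 8` with `N mod 3 ≠ 1` and positive `g_0, …, g_N`, there
exist unique positive `λ_0, …, λ_N` solving the multiplicative boundary system. -/
theorem unique_positive_lift (N : ℕ) (hN : 8 ≤ N) (h3 : N % 3 ≠ 1)
    (g : ℕ → ℝ) (hg : ∀ i, i ≤ N → 0 < g i) :
    ∃ l : ℕ → ℝ, SysHolds N g l ∧
      ∀ l' : ℕ → ℝ, SysHolds N g l' → ∀ i, i ≤ N → l' i = l i := by
  obtain ⟨m, rfl⟩ : ∃ m, N = m + 8 := ⟨N - 8, by omega⟩
  set g' : ℕ → ℝ := fun i => if i ≤ m + 8 then g i else 1 with hg'def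
  have hg'pos : ∀ i, 0 < g' i := by
    intro i; rw [hg'def]; dsimp only; split_ifs with h
    exacts [hg i h, one_pos]
  have hagree : ∀ i, i ≤ m + 8 → g i = g' i := by
    intro i hi; rw [hg'def]; simp [hi]
  obtain ⟨l, hsys, huniq⟩ := key m h3 g' hg'pos
  exact ⟨l, (SysHolds_congr _ _ _ _ hagree).2 hsys,
    fun l' h' => huniq l' ((SysHolds_congr _ _ _ _ hagree).1 h')⟩
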